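/- arXiv:0906.2359 — 3 statements merged into one kernel-verified Lean document; each statement's English description precedes it below -/
import Mathlib

section
/- For every integer n ≥ 1 and every real x ∈ [-1, 1) and every i ∈ {0, ..., n-1}, one has x^i + x^(i+1) + x^(n-i-1) + x^(n-i) ≤ 2(1 + x^n). -/
theorem stmt_0 (n : ℕ) (hn : 1 ≤ n) (x : ℝ) (hx1 : -1 ≤ x) (hx2 : x < 1)
    (i : ℕ) (hi : i ≤ n - 1) :
    x ^ i + x ^ (i + 1) + x ^ (n - i - 1) + x ^ (n - i) ≤ 2 * (1 + x ^ n) := by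
  have hxabs : |x| ≤ 1 := abs_le.mpr ⟨hx1, hx2.le⟩
  have h1 : x ^ (i + 1) = x ^ i * x := pow_succ x i
  have h3 : x ^ (n - i) = x ^ (n - i - 1) * x := by
    rw [← pow_succ]; congr 1; omega
  have h4 : x ^ n = x ^ i * x ^ (n - i - 1) * x := by
    rw [← pow_add, ← pow_succ]; congr 1; omega
  have ha : |x ^ i| ≤ 1 := by rw [abs_pow]; exact pow_le_one₀ (abs_nonneg x) hxabs
  have hb : |x ^ (n - i - 1)| ≤ 1 := by
    rw [abs_pow]; exact pow_le_one₀ (abs_nonneg x) hxabs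
  obtain ⟨ha1, ha2⟩ := abs_le.mp ha
  obtain ⟨hb1, hb2⟩ := abs_le.mp hb
  rw [h1, h3, h4]
  nlinarith [mul_nonneg (mul_nonneg (sub_nonneg.2 ha2) (sub_nonneg.2 hb2))
      (by linarith : (0:ℝ) ≤ 1 + x),
    mul_nonneg (by nlinarith : (0:ℝ) ≤ 1 - x ^ i * x ^ (n - i - 1))
      (by linarith : (0:ℝ) ≤ 1 - x)]
end

section
/- Define W(n,x) = (n(1 - x²) - 2x(1 - x^n)) / (1 - x)² for real x ∈ [-1,1) and positive integer n. Then W(n,·) is monotone increasing on [-1,1): if -1 ≤ x ≤ y < 1 then W(n,x) ≤ W(n,y). -/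
noncomputable def W (n : ℕ) (x : ℝ) : ℝ :=
  ((n : ℝ) * (1 - x ^ 2) - 2 * x * (1 - x ^ n)) / (1 - x) ^ 2

lemma key_nonneg (m : ℕ) (x : ℝ) (hx : -1 ≤ x) (hx1 : x ≤ 1) :
    0 ≤ ((m:ℝ)+1)*(1-x) - (1+x) + ((m:ℝ)+2)*x^(m+1) - (m:ℝ)*x^(m+1)*x := by
  have habs : |x| ≤ 1 := abs_le.2 ⟨hx, hx1⟩
  have hpow : ∀ k : ℕ, x ^ k ≤ 1 := fun k => by
    calc x ^ k ≤ |x ^ k| := le_abs_self _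
    _ = |x| ^ k := abs_pow x k
    _ ≤ 1 := pow_le_one₀ (abs_nonneg x) habs
  have hsumnn : (0:ℝ) ≤ ∑ d ∈ Finset.range m, (1 - x^(d+1)) * (1 - x^(m-d)) :=
    Finset.sum_nonneg fun d _ =>
      mul_nonneg (by linarith [hpow (d+1)]) (by linarith [hpow (m-d)])
  have hexp : ∀ d ∈ Finset.range m, (1 - x^(d+1)) * (1 - x^(m-d))
      = 1 + x^(m+1) - x^(d+1) - x^(m-d) := by
    intro d hd
    have hd' : d < m := Finset.mem_range.1 hd
    have h : x^(d+1) * x^(m-d) = x^(m+1) := by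
      rw [← pow_add]; congr 1; omega
    nlinarith [h]
  have hrefl : ∑ d ∈ Finset.range m, x^(m-d) = ∑ d ∈ Finset.range m, x^(d+1) := by
    rw [← Finset.sum_range_reflect (fun j => x^(j+1)) m]
    exact Finset.sum_congr rfl (fun d hd => by
      have := Finset.mem_range.1 hd; congr 1; omega)
  have hTsum : ∑ d ∈ Finset.range m, x^(d+1) = x * ∑ d ∈ Finset.range m, x^d := by
    rw [Finset.mul_sum]; exact Finset.sum_congr rfl fun d _ => by ring
  have hgeom : (∑ i ∈ Finset.range m, x ^ i) * (x - 1) = x ^ m - 1 := geom_sum_mul x m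
  have hsum : ∑ d ∈ Finset.range m, (1 - x^(d+1)) * (1 - x^(m-d))
      = (m:ℝ) * (1 + x^(m+1)) - 2 * (x * ∑ d ∈ Finset.range m, x^d) := by
    rw [Finset.sum_congr rfl hexp]
    simp only [Finset.sum_sub_distrib, Finset.sum_add_distrib, Finset.sum_const,
      Finset.card_range, nsmul_eq_mul, hrefl, hTsum]
    ring
  have hid : (1-x) * ∑ d ∈ Finset.range m, (1 - x^(d+1)) * (1 - x^(m-d))
      = ((m:ℝ)+1)*(1-x) - (1+x) + ((m:ℝ)+2)*x^(m+1) - (m:ℝ)*x^(m+1)*x := by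
    rw [hsum]
    have hxm1 : x^(m+1) = x^m * x := pow_succ x m
    linear_combination (2*x) * hgeom - 2 * hxm1
  have := mul_nonneg (by linarith : (0:ℝ) ≤ 1 - x) hsumnn
  linarith [hid ▸ this]

theorem stmt_2 (n : ℕ) (hn : 1 ≤ n) (x y : ℝ)
    (hx : -1 ≤ x) (hxy : x ≤ y) (hy : y < 1) :
    W n x ≤ W n y := by
  obtain ⟨m, rfl⟩ : ∃ m, n = m + 1 := ⟨n - 1, by omega⟩
  -- derivative of W (m+1)
  have hW : ∀ z : ℝ, z < 1 → HasDerivAt (W (m+1))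
      ((((↑(m+1):ℝ) * (0 - 2*z) - (2*(1 - z^(m+1)) + 2*z*(0 - (↑(m+1):ℝ)*z^m))) * (1-z)^2
        - ((↑(m+1):ℝ)*(1-z^2) - 2*z*(1-z^(m+1))) * (2*(1-z)^1*(0-1))) / ((1-z)^2)^2) z := by
    intro z hz
    have hvne : (1 - z)^2 ≠ 0 := pow_ne_zero _ (by linarith)
    have h1 : HasDerivAt (fun z:ℝ => z^2) (2*z) z := by
      simpa using hasDerivAt_pow 2 z
    have h2 : HasDerivAt (fun z:ℝ => z^(m+1)) ((↑(m+1):ℝ)*z^m) z := by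
      simpa using hasDerivAt_pow (m+1) z
    have hu : HasDerivAt (fun z:ℝ => (↑(m+1):ℝ)*(1-z^2) - 2*z*(1-z^(m+1)))
        ((↑(m+1):ℝ) * (0 - 2*z) - (2*(1 - z^(m+1)) + 2*z*(0 - (↑(m+1):ℝ)*z^m))) z := by
      have ha : HasDerivAt (fun z:ℝ => (↑(m+1):ℝ)*(1-z^2)) ((↑(m+1):ℝ) * (0 - 2*z)) z :=
        ((hasDerivAt_const z (1:ℝ)).sub h1).const_mul _
      have hb : HasDerivAt (fun z:ℝ => 2*z*(1-z^(m+1)))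
          (2*(1 - z^(m+1)) + 2*z*(0 - (↑(m+1):ℝ)*z^m)) z := by
        have hc : HasDerivAt (fun z:ℝ => 2*z) 2 z := by
          simpa using (hasDerivAt_id z).const_mul (2:ℝ)
        exact hc.mul ((hasDerivAt_const z (1:ℝ)).sub h2)
      exact ha.sub hb
    have hv : HasDerivAt (fun z:ℝ => (1-z)^2) (2*(1-z)^1*(0-1)) z := by
      have : HasDerivAt (fun z:ℝ => 1-z) (0-1) z :=
        (hasDerivAt_const z (1:ℝ)).sub (hasDerivAt_id z)
      simpa using this.fun_pow 2
    exact hu.div hv hvne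
  have hmono : MonotoneOn (W (m+1)) (Set.Ico (-1:ℝ) 1) := by
    apply monotoneOn_of_deriv_nonneg (convex_Ico _ _)
    · exact fun z hz => ((hW z hz.2).differentiableAt.continuousAt).continuousWithinAt
    · rw [interior_Ico]
      exact fun z hz => (hW z hz.2).differentiableAt.differentiableWithinAt
    · rw [interior_Ico]
      intro z hz
      rw [(hW z hz.2).deriv]
      apply div_nonneg _ (by positivity)
      have hkey := key_nonneg m z hz.1.le hz.2.le
      have hz1 : (0:ℝ) ≤ 1 - z := by linarith [hz.2]
      have : (((↑(m+1):ℝ) * (0 - 2*z) - (2*(1 - z^(m+1)) + 2*z*(0 - (↑(m+1):ℝ)*z^m))) * (1-z)^2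
          - ((↑(m+1):ℝ)*(1-z^2) - 2*z*(1-z^(m+1))) * (2*(1-z)^1*(0-1)))
          = 2*(1-z) * (((m:ℝ)+1)*(1-z) - (1+z) + ((m:ℝ)+2)*z^(m+1) - (m:ℝ)*z^(m+1)*z) := by
        push_cast
        ring
      rw [this]
      exact mul_nonneg (by linarith) hkey
  exact hmono ⟨hx, lt_of_le_of_lt hxy hy⟩ ⟨le_trans hx hxy, hy⟩ hxy
end

section
/- Let P be a row-stochastic matrix on a finite set D, reversible and ergodic with respect to a positive probability distribution π, and let β be the second largest absolute value of its eigenvalues. Then for every n ≥ 1, the operator norm of P^n on the mean-zero subspace l₄⁰(D,π) satisfies ‖P^n‖_{l₄⁰→l₄⁰} ≤ 2√2 · β^{n/2}. -/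
/-- The weighted `l₄(D,π)` norm. -/
noncomputable def norm4 {D : Type*} [Fintype D] (π : D → ℝ) (f : D → ℝ) : ℝ :=
  (∑ x, |f x| ^ 4 * π x) ^ ((1 : ℝ) / 4)

section Aux

variable {D : Type*} [Fintype D] [DecidableEq D]

lemma aux_pow_nonneg (P : Matrix D D ℝ) (h : ∀ x y, 0 ≤ P x y) (m : ℕ) :
    ∀ x y, 0 ≤ (P ^ m) x y := by
  induction m with
  | zero =>
    intro x y
    simp only [pow_zero, Matrix.one_apply]
    split <;> norm_num
  | succ m ih =>
    intro x y
    rw [pow_succ, Matrix.mul_apply]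
    exact Finset.sum_nonneg fun z _ => mul_nonneg (ih x z) (h z y)

lemma aux_pow_row (P : Matrix D D ℝ) (h : ∀ x, ∑ y, P x y = 1) (m : ℕ) :
    ∀ x, ∑ y, (P ^ m) x y = 1 := by
  induction m with
  | zero => intro x; simp [Matrix.one_apply]
  | succ m ih =>
    intro x
    simp only [pow_succ, Matrix.mul_apply]
    calc ∑ y, ∑ z, (P ^ m) x z * P z y
        = ∑ z, ∑ y, (P ^ m) x z * P z y := Finset.sum_comm
      _ = ∑ z, (P ^ m) x z * ∑ y, P z y := by simp [Finset.mul_sum]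
      _ = 1 := by simp [h, ih]

lemma aux_pow_rev (π : D → ℝ) (P : Matrix D D ℝ)
    (hrev : ∀ x y, π x * P x y = π y * P y x) (m : ℕ) :
    ∀ x y, π x * (P ^ m) x y = π y * (P ^ m) y x := by
  induction m with
  | zero =>
    intro x y
    simp only [pow_zero, Matrix.one_apply]
    rcases eq_or_ne x y with rfl | hxy
    · rfl
    · simp [hxy, hxy.symm]
  | succ m ih =>
    intro x y
    calc π x * (P ^ (m + 1)) x y = ∑ z, (π x * (P ^ m) x z) * P z y := by
          rw [pow_succ, Matrix.mul_apply, Finset.mul_sum]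
          exact Finset.sum_congr rfl fun z _ => by ring
      _ = ∑ z, (P ^ m) z x * (π z * P z y) := by
          exact Finset.sum_congr rfl fun z _ => by rw [ih]; ring
      _ = ∑ z, (P ^ m) z x * (π y * P y z) := by
          exact Finset.sum_congr rfl fun z _ => by rw [hrev]
      _ = π y * ∑ z, P y z * (P ^ m) z x := by
          rw [Finset.mul_sum]; exact Finset.sum_congr rfl fun z _ => by ring
      _ = π y * (P ^ (m + 1)) y x := by rw [pow_succ', Matrix.mul_apply]

lemma aux_jensen (Q : Matrix D D ℝ) (hQ0 : ∀ x y, 0 ≤ Q x y)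
    (hQ1 : ∀ x, ∑ y, Q x y = 1) (v : D → ℝ) (x : D) :
    (Q.mulVec v x) ^ 2 ≤ Q.mulVec (fun z => v z ^ 2) x := by
  have key := Finset.sum_mul_sq_le_sq_mul_sq Finset.univ
    (fun z => Real.sqrt (Q x z)) (fun z => Real.sqrt (Q x z) * v z)
  have h1 : ∀ z, Real.sqrt (Q x z) * (Real.sqrt (Q x z) * v z) = Q x z * v z := by
    intro z
    rw [← mul_assoc, Real.mul_self_sqrt (hQ0 x z)]
  have h2 : ∀ z, Real.sqrt (Q x z) ^ 2 = Q x z := fun z => Real.sq_sqrt (hQ0 x z)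
  have h3 : ∀ z, (Real.sqrt (Q x z) * v z) ^ 2 = Q x z * v z ^ 2 := by
    intro z; rw [mul_pow, h2]
  simp only [h1, h2, h3] at key
  calc (Q.mulVec v x) ^ 2 = (∑ z, Q x z * v z) ^ 2 := rfl
    _ ≤ (∑ z, Q x z) * ∑ z, Q x z * v z ^ 2 := key
    _ = Q.mulVec (fun z => v z ^ 2) x := by rw [hQ1 x, one_mul]; rfl

lemma aux_selfadj (π : D → ℝ) (Q : Matrix D D ℝ)
    (hrev : ∀ x y, π x * Q x y = π y * Q y x) (a b : D → ℝ) :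
    ∑ x, a x * Q.mulVec b x * π x = ∑ x, Q.mulVec a x * b x * π x := by
  calc ∑ x, a x * Q.mulVec b x * π x
      = ∑ x, ∑ y, (π x * Q x y) * (a x * b y) := by
        refine Finset.sum_congr rfl fun x _ => ?_
        rw [Matrix.mulVec, dotProduct, Finset.mul_sum, Finset.sum_mul]
        exact Finset.sum_congr rfl fun y _ => by ring
    _ = ∑ x, ∑ y, (π y * Q y x) * (a x * b y) := by
        exact Finset.sum_congr rfl fun x _ => Finset.sum_congr rfl fun y _ => by rw [hrev]
    _ = ∑ y, ∑ x, (π y * Q y x) * (a x * b y) := Finset.sum_comm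
    _ = ∑ y, Q.mulVec a y * b y * π y := by
        refine Finset.sum_congr rfl fun y _ => ?_
        rw [Matrix.mulVec, dotProduct, Finset.sum_mul, Finset.sum_mul]
        exact Finset.sum_congr rfl fun x _ => by ring

lemma aux_cs (π : D → ℝ) (hπ : ∀ x, 0 ≤ π x) (a b : D → ℝ) :
    (∑ x, a x * b x * π x) ^ 2 ≤ (∑ x, a x ^ 2 * π x) * (∑ x, b x ^ 2 * π x) := by
  have key := Finset.sum_mul_sq_le_sq_mul_sq Finset.univ
    (fun x => a x * Real.sqrt (π x)) (fun x => b x * Real.sqrt (π x))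
  have h1 : ∀ x, (a x * Real.sqrt (π x)) * (b x * Real.sqrt (π x)) = a x * b x * π x := by
    intro x
    have : Real.sqrt (π x) * Real.sqrt (π x) = π x := Real.mul_self_sqrt (hπ x)
    calc (a x * Real.sqrt (π x)) * (b x * Real.sqrt (π x))
        = a x * b x * (Real.sqrt (π x) * Real.sqrt (π x)) := by ring
      _ = a x * b x * π x := by rw [this]
  have h2 : ∀ (c : D → ℝ) x, (c x * Real.sqrt (π x)) ^ 2 = c x ^ 2 * π x := by
    intro c x; rw [mul_pow, Real.sq_sqrt (hπ x)]
  simp only [h1, h2] at key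
  exact key


lemma aux_complete (π : D → ℝ) (u : Fin (Fintype.card D) → D → ℝ)
    (h_ortho : ∀ k l, ∑ x, u k x * u l x * π x = if k = l then (1 : ℝ) else 0) :
    ∀ x y, (∑ k, u k x * π x * u k y) = if x = y then (1 : ℝ) else 0 := by
  classical
  let A : Matrix (Fin (Fintype.card D)) D ℝ := Matrix.of fun k x => u k x
  let W : Matrix D (Fin (Fintype.card D)) ℝ := Matrix.of fun x k => u k x * π x
  have e : Fin (Fintype.card D) ≃ D := (Fintype.equivFin D).symm
  have hAW : A * W = 1 := by
    ext k l
    simp only [Matrix.mul_apply, A, W, Matrix.of_apply, Matrix.one_apply]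
    rw [← h_ortho k l]
    refine Finset.sum_congr rfl fun x _ => by ring
  have hWA : W * A = 1 := (Matrix.mul_eq_one_comm_of_equiv e).mp hAW
  intro x y
  have h2 : (W * A) x y = (1 : Matrix D D ℝ) x y := by rw [hWA]
  simp only [Matrix.mul_apply, A, W, Matrix.of_apply, Matrix.one_apply] at h2
  exact h2

lemma aux_expand (π : D → ℝ) (u : Fin (Fintype.card D) → D → ℝ)
    (hcomp : ∀ x y, (∑ k, u k x * π x * u k y) = if x = y then (1 : ℝ) else 0)
    (h : D → ℝ) (y : D) :
    ∑ k, (∑ x, h x * u k x * π x) * u k y = h y := by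
  calc ∑ k, (∑ x, h x * u k x * π x) * u k y
      = ∑ k, ∑ x, h x * (u k x * π x * u k y) := by
        refine Finset.sum_congr rfl fun k _ => ?_
        rw [Finset.sum_mul]
        exact Finset.sum_congr rfl fun x _ => by ring
    _ = ∑ x, h x * ∑ k, u k x * π x * u k y := by
        rw [Finset.sum_comm]
        exact Finset.sum_congr rfl fun x _ => by rw [Finset.mul_sum]
    _ = h y := by
        simp only [hcomp, mul_ite, mul_one, mul_zero]
        simp [Finset.sum_ite_eq']

lemma aux_pair (π : D → ℝ) (u : Fin (Fintype.card D) → D → ℝ)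
    (h_ortho : ∀ k l, ∑ x, u k x * u l x * π x = if k = l then (1 : ℝ) else 0)
    (a b : Fin (Fintype.card D) → ℝ) :
    ∑ x, (∑ k, a k * u k x) * (∑ l, b l * u l x) * π x = ∑ k, a k * b k := by
  calc ∑ x, (∑ k, a k * u k x) * (∑ l, b l * u l x) * π x
      = ∑ x, ∑ k, ∑ l, (a k * b l) * (u k x * u l x * π x) := by
        refine Finset.sum_congr rfl fun x _ => ?_
        rw [Finset.sum_mul_sum, Finset.sum_mul]
        refine Finset.sum_congr rfl fun k _ => ?_
        rw [Finset.sum_mul]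
        exact Finset.sum_congr rfl fun l _ => by ring
    _ = ∑ k, ∑ l, (a k * b l) * ∑ x, u k x * u l x * π x := by
        rw [Finset.sum_comm]
        refine Finset.sum_congr rfl fun k _ => ?_
        rw [Finset.sum_comm]
        exact Finset.sum_congr rfl fun l _ => by rw [Finset.mul_sum]
    _ = ∑ k, ∑ l, (a k * b l) * (if k = l then (1:ℝ) else 0) := by
        simp only [h_ortho]
    _ = ∑ k, a k * b k := by
        simp [mul_ite, mul_one, mul_zero, Finset.sum_ite_eq]

lemma aux_pow_eig (P : Matrix D D ℝ) (u : Fin (Fintype.card D) → D → ℝ)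
    (βs : Fin (Fintype.card D) → ℝ)
    (h_eig : ∀ k, P.mulVec (u k) = βs k • u k) (m : ℕ) :
    ∀ k, (P ^ m).mulVec (u k) = (βs k ^ m) • u k := by
  induction m with
  | zero => intro k; simp
  | succ m ih =>
    intro k
    rw [pow_succ', ← Matrix.mulVec_mulVec, ih, Matrix.mulVec_smul, h_eig, smul_smul,
      ← pow_succ]

lemma aux_l2 (π : D → ℝ) (P : Matrix D D ℝ)
    (u : Fin (Fintype.card D) → D → ℝ) (βs : Fin (Fintype.card D) → ℝ) (β : ℝ)
    (h_eig : ∀ k, P.mulVec (u k) = βs k • u k)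
    (h_ortho : ∀ k l, ∑ x, u k x * u l x * π x = if k = l then (1 : ℝ) else 0)
    (h_u0 : ∀ k : Fin (Fintype.card D), (k : ℕ) = 0 → u k = fun _ => 1)
    (hβub : ∀ k : Fin (Fintype.card D), (k : ℕ) ≠ 0 → |βs k| ≤ β)
    (m : ℕ) (h : D → ℝ) (hh : ∑ x, h x * π x = 0) :
    ∑ x, ((P ^ m).mulVec h x) ^ 2 * π x ≤ (β ^ m) ^ 2 * ∑ x, h x ^ 2 * π x := by
  have hcomp := aux_complete π u h_ortho
  set c : Fin (Fintype.card D) → ℝ := fun k => ∑ x, h x * u k x * π x with hc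
  have hexp : ∀ y, h y = ∑ k, c k * u k y := fun y => (aux_expand π u hcomp h y).symm
  have heig := aux_pow_eig P u βs h_eig m
  have hQe : ∀ y, (P ^ m).mulVec h y = ∑ k, (βs k ^ m * c k) * u k y := by
    intro y
    calc (P ^ m).mulVec h y = ∑ z, (P ^ m) y z * h z := rfl
      _ = ∑ z, ∑ k, c k * ((P ^ m) y z * u k z) := by
          refine Finset.sum_congr rfl fun z _ => ?_
          rw [hexp z, Finset.mul_sum]
          exact Finset.sum_congr rfl fun k _ => by ring
      _ = ∑ k, c k * ∑ z, (P ^ m) y z * u k z := by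
          rw [Finset.sum_comm]
          exact Finset.sum_congr rfl fun k _ => by rw [Finset.mul_sum]
      _ = ∑ k, c k * ((βs k ^ m) • u k) y := by
          refine Finset.sum_congr rfl fun k _ => ?_
          rw [← heig k]
          rfl
      _ = ∑ k, (βs k ^ m * c k) * u k y := by
          refine Finset.sum_congr rfl fun k _ => ?_
          simp [Pi.smul_apply, smul_eq_mul]
          ring
  have h1 : ∑ x, ((P ^ m).mulVec h x) ^ 2 * π x = ∑ k, (βs k ^ m * c k) ^ 2 := by
    calc ∑ x, ((P ^ m).mulVec h x) ^ 2 * π x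
        = ∑ x, (∑ k, (βs k ^ m * c k) * u k x) * (∑ l, (βs l ^ m * c l) * u l x) * π x := by
          refine Finset.sum_congr rfl fun x _ => ?_
          rw [hQe x]; ring
      _ = ∑ k, (βs k ^ m * c k) * (βs k ^ m * c k) :=
          aux_pair π u h_ortho _ _
      _ = ∑ k, (βs k ^ m * c k) ^ 2 := by
          exact Finset.sum_congr rfl fun k _ => (sq _).symm
  have h2 : ∑ x, h x ^ 2 * π x = ∑ k, c k ^ 2 := by
    calc ∑ x, h x ^ 2 * π x
        = ∑ x, (∑ k, c k * u k x) * (∑ l, c l * u l x) * π x := by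
          refine Finset.sum_congr rfl fun x _ => ?_
          rw [← hexp x]; ring
      _ = ∑ k, c k * c k := aux_pair π u h_ortho _ _
      _ = ∑ k, c k ^ 2 := Finset.sum_congr rfl fun k _ => (sq _).symm
  rw [h1, h2, Finset.mul_sum]
  apply Finset.sum_le_sum
  intro k _
  rcases eq_or_ne (k : ℕ) 0 with hk0 | hk0
  · have hck : c k = 0 := by
      rw [hc]
      simp only [h_u0 k hk0, mul_one]
      exact hh
    simp [hck]
  · have habs : |βs k| ≤ β := hβub k hk0
    have hsq : βs k ^ 2 ≤ β ^ 2 := by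
      have h' := abs_le.mp habs
      nlinarith [h'.1, h'.2]
    calc (βs k ^ m * c k) ^ 2 = (βs k ^ 2) ^ m * c k ^ 2 := by ring
      _ ≤ (β ^ 2) ^ m * c k ^ 2 :=
          mul_le_mul_of_nonneg_right (pow_le_pow_left₀ (sq_nonneg _) hsq m) (sq_nonneg _)
      _ = (β ^ m) ^ 2 * c k ^ 2 := by ring

end Aux

theorem stmt_13 {D : Type*} [Fintype D] [Nonempty D] [DecidableEq D]
    (π : D → ℝ) (hπpos : ∀ x, 0 < π x) (hπsum : ∑ x, π x = 1)
    (P : Matrix D D ℝ) (hPnonneg : ∀ x y, 0 ≤ P x y)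
    (hProw : ∀ x, ∑ y, P x y = 1)
    (hrev : ∀ x y, π x * P x y = π y * P y x)
    (hcard : 1 < Fintype.card D)
    (u : Fin (Fintype.card D) → D → ℝ) (βs : Fin (Fintype.card D) → ℝ)
    (h_eig : ∀ k, P.mulVec (u k) = βs k • u k)
    (h_ortho : ∀ k l, ∑ x, u k x * u l x * π x = if k = l then (1 : ℝ) else 0)
    (h_b0 : ∀ k : Fin (Fintype.card D), (k : ℕ) = 0 → βs k = 1)
    (h_u0 : ∀ k : Fin (Fintype.card D), (k : ℕ) = 0 → u k = fun _ => 1)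
    (h_erg : ∀ k : Fin (Fintype.card D), (k : ℕ) ≠ 0 → |βs k| < 1)
    (β : ℝ)
    (hβ : IsGreatest {r : ℝ | ∃ k : Fin (Fintype.card D), (k : ℕ) ≠ 0 ∧ r = |βs k|} β)
    (n : ℕ) (hn : 1 ≤ n) :
    ∀ f : D → ℝ, (∑ x, f x * π x = 0) →
      norm4 π ((P ^ n).mulVec f)
        ≤ 2 * Real.sqrt 2 * β ^ ((n : ℝ) / 2) * norm4 π f := by
  intro f hf
  have hβ0 : 0 ≤ β := by
    obtain ⟨k, hk, hkeq⟩ := hβ.1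
    rw [hkeq]; exact abs_nonneg _
  have hβub : ∀ k : Fin (Fintype.card D), (k : ℕ) ≠ 0 → |βs k| ≤ β :=
    fun k hk => hβ.2 ⟨k, hk, rfl⟩
  have hπ0 : ∀ x, (0 : ℝ) ≤ π x := fun x => (hπpos x).le
  set Q := P ^ n with hQdef
  have hQ0 : ∀ x y, 0 ≤ Q x y := aux_pow_nonneg P hPnonneg n
  have hQ1 : ∀ x, ∑ y, Q x y = 1 := aux_pow_row P hProw n
  have hQrev : ∀ x y, π x * Q x y = π y * Q y x := aux_pow_rev π P hrev n
  have hl2 : ∀ h : D → ℝ, (∑ x, h x * π x = 0) →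
      ∑ x, (Q.mulVec h x) ^ 2 * π x ≤ ((β ^ n) ^ 2) * ∑ x, h x ^ 2 * π x := by
    intro h hh
    rw [hQdef]
    exact aux_l2 π P u βs β h_eig h_ortho h_u0 hβub n h hh
  set g : D → ℝ := Q.mulVec f with hgdef
  set K := ∑ x, f x ^ 4 * π x with hK
  set Y := ∑ x, g x ^ 4 * π x with hY
  set s := ∑ x, f x ^ 2 * π x with hs
  set M := ∑ x, g x ^ 2 * π x with hM
  set t := (β ^ n) ^ 2 with ht
  clear_value Q g K Y s M t
  have ht0 : 0 ≤ t := by rw [ht]; exact sq_nonneg _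
  have hK0 : 0 ≤ K := by
    rw [hK]; exact Finset.sum_nonneg fun x _ => mul_nonneg (by positivity) (hπ0 x)
  have hY0 : 0 ≤ Y := by
    rw [hY]; exact Finset.sum_nonneg fun x _ => mul_nonneg (by positivity) (hπ0 x)
  have hs0 : 0 ≤ s := by
    rw [hs]; exact Finset.sum_nonneg fun x _ => mul_nonneg (sq_nonneg _) (hπ0 x)
  have hM0 : 0 ≤ M := by
    rw [hM]; exact Finset.sum_nonneg fun x _ => mul_nonneg (sq_nonneg _) (hπ0 x)
  have hsK : s ^ 2 ≤ K := by
    rw [hs, hK]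
    have h := aux_cs π hπ0 (fun x => f x ^ 2) (fun _ => 1)
    simp only [mul_one, one_pow, one_mul] at h
    calc (∑ x, f x ^ 2 * π x) ^ 2 ≤ (∑ x, (f x ^ 2) ^ 2 * π x) * ∑ x, π x := h
      _ = ∑ x, f x ^ 4 * π x := by
          rw [hπsum, mul_one]
          exact Finset.sum_congr rfl fun x _ => by ring
  have hMt : M ≤ t * s := by
    rw [hM, hs, hgdef]
    exact hl2 f hf
  -- mean of g² minus M is zero
  have hhmean : ∑ x, (g x ^ 2 - M) * π x = 0 := by
    have : ∑ x, (g x ^ 2 - M) * π x = (∑ x, g x ^ 2 * π x) - M * ∑ x, π x := by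
      rw [Finset.mul_sum, ← Finset.sum_sub_distrib]
      exact Finset.sum_congr rfl fun x _ => by ring
    rw [this, hπsum, mul_one, ← hM, sub_self]
  -- stationarity of π under Q
  have hstat : ∀ z, ∑ x, Q x z * π x = π z := by
    intro z
    calc ∑ x, Q x z * π x = ∑ x, π z * Q z x := by
          refine Finset.sum_congr rfl fun x _ => ?_
          rw [mul_comm, hQrev]
      _ = π z := by rw [← Finset.mul_sum, hQ1, mul_one]
  have hQh_mean : ∑ x, Q.mulVec (fun z => g z ^ 2 - M) x * π x = 0 := by
    calc ∑ x, Q.mulVec (fun z => g z ^ 2 - M) x * π x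
        = ∑ x, ∑ z, (g z ^ 2 - M) * (Q x z * π x) := by
          refine Finset.sum_congr rfl fun x _ => ?_
          rw [Matrix.mulVec, dotProduct, Finset.sum_mul]
          exact Finset.sum_congr rfl fun z _ => by ring
      _ = ∑ z, (g z ^ 2 - M) * ∑ x, Q x z * π x := by
          rw [Finset.sum_comm]
          exact Finset.sum_congr rfl fun z _ => by rw [Finset.mul_sum]
      _ = ∑ z, (g z ^ 2 - M) * π z := by
          exact Finset.sum_congr rfl fun z _ => by rw [hstat]
      _ = 0 := hhmean
  have hQw : ∀ x, Q.mulVec (fun z => g z ^ 2) x = Q.mulVec (fun z => g z ^ 2 - M) x + M := by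
    intro x
    have hconst : ∑ z, Q x z * M = M := by rw [← Finset.sum_mul, hQ1, one_mul]
    calc Q.mulVec (fun z => g z ^ 2) x = ∑ z, Q x z * (g z ^ 2) := rfl
      _ = ∑ z, (Q x z * (g z ^ 2 - M) + Q x z * M) := by
          exact Finset.sum_congr rfl fun z _ => by ring
      _ = (∑ z, Q x z * (g z ^ 2 - M)) + ∑ z, Q x z * M := Finset.sum_add_distrib
      _ = Q.mulVec (fun z => g z ^ 2 - M) x + M := by rw [hconst]; rfl
  -- bound on the l2 norm of Q(g²)
  have hS2Qw : ∑ x, (Q.mulVec (fun z => g z ^ 2) x) ^ 2 * π x ≤ M ^ 2 + t * Y := by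
    have hexpand : ∑ x, (Q.mulVec (fun z => g z ^ 2) x) ^ 2 * π x
        = (∑ x, (Q.mulVec (fun z => g z ^ 2 - M) x) ^ 2 * π x)
          + (2 * M) * (∑ x, Q.mulVec (fun z => g z ^ 2 - M) x * π x)
          + M ^ 2 * ∑ x, π x := by
      rw [Finset.mul_sum, Finset.mul_sum, ← Finset.sum_add_distrib, ← Finset.sum_add_distrib]
      refine Finset.sum_congr rfl fun x _ => ?_
      rw [hQw x]; ring
    rw [hexpand, hQh_mean, hπsum, mul_zero, add_zero, mul_one]
    have hcontr := hl2 (fun z => g z ^ 2 - M) hhmean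
    have hsub : ∑ x, (g x ^ 2 - M) ^ 2 * π x ≤ Y := by
      have : ∑ x, (g x ^ 2 - M) ^ 2 * π x
          = (∑ x, g x ^ 4 * π x) - (2 * M) * (∑ x, g x ^ 2 * π x) + M ^ 2 * ∑ x, π x := by
        rw [Finset.mul_sum, Finset.mul_sum, ← Finset.sum_sub_distrib, ← Finset.sum_add_distrib]
        exact Finset.sum_congr rfl fun x _ => by ring
      rw [this, hπsum, mul_one, ← hM, ← hY]
      nlinarith [sq_nonneg M]
    have : ∑ x, (Q.mulVec (fun z => g z ^ 2 - M) x) ^ 2 * π x ≤ t * Y := by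
      calc ∑ x, (Q.mulVec (fun z => g z ^ 2 - M) x) ^ 2 * π x
          ≤ t * ∑ x, (g x ^ 2 - M) ^ 2 * π x := hcontr
        _ ≤ t * Y := mul_le_mul_of_nonneg_left hsub ht0
    linarith
  -- Jensen + self-adjointness + Cauchy-Schwarz
  have hstep1 : Y ≤ ∑ x, g x ^ 2 * Q.mulVec (fun z => f z ^ 2) x * π x := by
    rw [hY]
    apply Finset.sum_le_sum
    intro x _
    have hj : (g x) ^ 2 ≤ Q.mulVec (fun z => f z ^ 2) x := by
      rw [hgdef]; exact aux_jensen Q hQ0 hQ1 f x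
    calc g x ^ 4 * π x = g x ^ 2 * (g x) ^ 2 * π x := by ring
      _ ≤ g x ^ 2 * Q.mulVec (fun z => f z ^ 2) x * π x :=
          mul_le_mul_of_nonneg_right
            (mul_le_mul_of_nonneg_left hj (sq_nonneg _)) (hπ0 x)
  have hstep2 : ∑ x, g x ^ 2 * Q.mulVec (fun z => f z ^ 2) x * π x
      = ∑ x, Q.mulVec (fun z => g z ^ 2) x * f x ^ 2 * π x :=
    aux_selfadj π Q hQrev (fun z => g z ^ 2) (fun z => f z ^ 2)
  have hYT : Y ≤ ∑ x, Q.mulVec (fun z => g z ^ 2) x * f x ^ 2 * π x := by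
    rw [← hstep2]; exact hstep1
  have hstep3 : (∑ x, Q.mulVec (fun z => g z ^ 2) x * f x ^ 2 * π x) ^ 2
      ≤ (∑ x, (Q.mulVec (fun z => g z ^ 2) x) ^ 2 * π x) * K := by
    have h := aux_cs π hπ0 (fun x => Q.mulVec (fun z => g z ^ 2) x) (fun x => f x ^ 2)
    calc (∑ x, Q.mulVec (fun z => g z ^ 2) x * f x ^ 2 * π x) ^ 2
        ≤ (∑ x, (Q.mulVec (fun z => g z ^ 2) x) ^ 2 * π x) * ∑ x, (f x ^ 2) ^ 2 * π x := h
      _ = (∑ x, (Q.mulVec (fun z => g z ^ 2) x) ^ 2 * π x) * K := by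
          congr 1
          rw [hK]
          exact Finset.sum_congr rfl fun x _ => by ring
  -- the quadratic inequality
  have hY2 : Y ^ 2 ≤ t ^ 2 * K ^ 2 + t * K * Y := by
    have hMsq : M ^ 2 ≤ t ^ 2 * K := by
      have h1 : M * M ≤ (t * s) * (t * s) :=
        mul_le_mul hMt hMt hM0 (mul_nonneg ht0 hs0)
      nlinarith [hsK, ht0, sq_nonneg t]
    calc Y ^ 2 ≤ (∑ x, Q.mulVec (fun z => g z ^ 2) x * f x ^ 2 * π x) ^ 2 := by
          have hT0 : 0 ≤ ∑ x, Q.mulVec (fun z => g z ^ 2) x * f x ^ 2 * π x :=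
            le_trans hY0 hYT
          nlinarith [hYT, hY0, hT0]
      _ ≤ (∑ x, (Q.mulVec (fun z => g z ^ 2) x) ^ 2 * π x) * K := hstep3
      _ ≤ (M ^ 2 + t * Y) * K := mul_le_mul_of_nonneg_right hS2Qw hK0
      _ ≤ (t ^ 2 * K + t * Y) * K := by
          apply mul_le_mul_of_nonneg_right _ hK0
          linarith [hMsq]
      _ = t ^ 2 * K ^ 2 + t * K * Y := by ring
  have hYfin : Y ≤ 2 * t * K := by
    by_contra hcon
    push_neg at hcon
    have htK0 : 0 ≤ t * K := mul_nonneg ht0 hK0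
    have h2tK : (0:ℝ) ≤ 2 * t * K := by linarith
    have hYpos : 0 < Y := lt_of_le_of_lt h2tK hcon
    have hhalf : t * K < Y / 2 := by linarith
    have ha : (t * K) * (t * K) ≤ (t * K) * (Y / 2) :=
      mul_le_mul_of_nonneg_left hhalf.le htK0
    have hb : (t * K) * (Y / 2) < (Y / 2) * (Y / 2) :=
      mul_lt_mul_of_pos_right hhalf (half_pos hYpos)
    have hc : (t * K) * Y < (Y / 2) * Y :=
      mul_lt_mul_of_pos_right hhalf hYpos
    have he : t ^ 2 * K ^ 2 = (t * K) * (t * K) := by ring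
    have hd : (0:ℝ) < Y * Y := mul_pos hYpos hYpos
    have he2 : Y ^ 2 = Y * Y := sq Y
    linarith only [hY2, ha, hb, hc, he, hd, he2]
  -- final rpow computation
  have habs4 : ∀ (v : D → ℝ) (x : D), |v x| ^ 4 * π x = v x ^ 4 * π x := by
    intro v x
    congr 1
    rw [pow_abs]
    exact abs_of_nonneg (by positivity)
  have hnorm4g : norm4 π g = Y ^ ((1 : ℝ) / 4) := by
    unfold norm4
    rw [hY]
    congr 1
    exact Finset.sum_congr rfl fun x _ => habs4 g x
  have hnorm4f : norm4 π f = K ^ ((1 : ℝ) / 4) := by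
    unfold norm4
    rw [hK]
    congr 1
    exact Finset.sum_congr rfl fun x _ => habs4 f x
  rw [hnorm4g, hnorm4f]
  have hb2 : 0 ≤ β ^ ((n : ℝ) / 2) := Real.rpow_nonneg hβ0 _
  have hk4 : (0:ℝ) ≤ K ^ ((1 : ℝ) / 4) := Real.rpow_nonneg hK0 _
  calc Y ^ ((1 : ℝ) / 4) ≤ (2 * t * K) ^ ((1 : ℝ) / 4) :=
        Real.rpow_le_rpow hY0 hYfin (by norm_num)
    _ = (2 : ℝ) ^ ((1 : ℝ) / 4) * t ^ ((1 : ℝ) / 4) * K ^ ((1 : ℝ) / 4) := by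
        rw [Real.mul_rpow (by positivity) hK0, Real.mul_rpow (by norm_num) ht0]
    _ = (2 : ℝ) ^ ((1 : ℝ) / 4) * β ^ ((n : ℝ) / 2) * K ^ ((1 : ℝ) / 4) := by
        congr 2
        rw [ht, ← pow_mul, ← Real.rpow_natCast β (n * 2), ← Real.rpow_mul hβ0]
        congr 1
        push_cast
        ring
    _ ≤ 2 * Real.sqrt 2 * β ^ ((n : ℝ) / 2) * K ^ ((1 : ℝ) / 4) := by
        have h24 : (2 : ℝ) ^ ((1 : ℝ) / 4) ≤ 2 * Real.sqrt 2 := by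
          have hle2 : (2 : ℝ) ^ ((1 : ℝ) / 4) ≤ 2 := by
            calc (2 : ℝ) ^ ((1 : ℝ) / 4) ≤ (2 : ℝ) ^ (1 : ℝ) :=
                  Real.rpow_le_rpow_of_exponent_le (by norm_num) (by norm_num)
              _ = 2 := Real.rpow_one 2
          have hsq : (1 : ℝ) ≤ Real.sqrt 2 := by
            rw [show (1 : ℝ) = Real.sqrt 1 from (Real.sqrt_one).symm]
            exact Real.sqrt_le_sqrt (by norm_num)
          have : (2:ℝ) ≤ 2 * Real.sqrt 2 := by linarith only [hsq]
          linarith only [hle2, this]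
        exact mul_le_mul_of_nonneg_right
          (mul_le_mul_of_nonneg_right h24 hb2) hk4
end
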